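/- Let U_1,…,U_n be independent standard normally distributed real random variables. Then E[ ( n^{−1} Σ_{i=1}^n U_i² − 2 )_+ ] ≤ (16/n)·exp(−n/16), where (a)_+ := max(a, 0). -/

import Mathlib

open MeasureTheory ProbabilityTheory

lemma gauss_pdf_mul_integrable :
    Integrable (fun x : ℝ => gaussianPDFReal 0 1 x * Real.exp ((1/4) * x ^ 2)) := by
  have h : (fun x : ℝ => gaussianPDFReal 0 1 x * Real.exp ((1/4) * x ^ 2))
      = fun x : ℝ => (Real.sqrt (2 * Real.pi))⁻¹ * Real.exp (-(1/4) * x ^ 2) := by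
    funext x
    simp only [gaussianPDFReal, NNReal.coe_one, mul_one, sub_zero]
    rw [mul_assoc, ← Real.exp_add]
    congr 1
    ring
  rw [h]
  exact (integrable_exp_neg_mul_sq (by norm_num : (0:ℝ) < 1/4)).const_mul _

lemma gauss_exp_integrable :
    Integrable (fun x : ℝ => Real.exp ((1/4) * x ^ 2)) (gaussianReal 0 1) := by
  rw [gaussianReal_of_var_ne_zero 0 one_ne_zero]
  have hpdf : (gaussianPDF 0 1) = fun x => ((gaussianPDFReal 0 1 x).toNNReal : ENNReal) := by
    funext x; rfl
  rw [hpdf]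
  rw [integrable_withDensity_iff_integrable_smul
    (f := fun x => (gaussianPDFReal 0 1 x).toNNReal)
    (measurable_real_toNNReal.comp (measurable_gaussianPDFReal 0 1))]
  refine gauss_pdf_mul_integrable.congr (Filter.Eventually.of_forall fun x => ?_)
  simp [NNReal.smul_def, Real.coe_toNNReal _ (gaussianPDFReal_nonneg 0 1 x)]

lemma gauss_exp_integral :
    ∫ x, Real.exp ((1/4) * x ^ 2) ∂(gaussianReal 0 1) = Real.sqrt 2 := by
  rw [gaussianReal_of_var_ne_zero 0 one_ne_zero]
  have hpdf : (gaussianPDF 0 1) = fun x => ((gaussianPDFReal 0 1 x).toNNReal : ENNReal) := by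
    funext x; rfl
  rw [hpdf]
  rw [integral_withDensity_eq_integral_smul
    (f := fun x => (gaussianPDFReal 0 1 x).toNNReal)
    (measurable_real_toNNReal.comp (measurable_gaussianPDFReal 0 1))]
  have h : (fun x : ℝ => (gaussianPDFReal 0 1 x).toNNReal • Real.exp ((1/4) * x ^ 2))
      = fun x : ℝ => (Real.sqrt (2 * Real.pi))⁻¹ * Real.exp (-(1/4) * x ^ 2) := by
    funext x
    rw [NNReal.smul_def, Real.coe_toNNReal _ (gaussianPDFReal_nonneg 0 1 x)]
    simp only [gaussianPDFReal, NNReal.coe_one, mul_one, sub_zero, smul_eq_mul]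
    rw [mul_assoc, ← Real.exp_add]
    congr 1
    ring
  rw [h]
  rw [integral_const_mul, integral_gaussian (1/4)]
  have hπ : (0:ℝ) < Real.pi := Real.pi_pos
  rw [show Real.pi / (1/4) = 2 * (2 * Real.pi) by ring,
    Real.sqrt_mul (by norm_num) (2 * Real.pi)]
  rw [inv_mul_eq_div, mul_div_assoc, div_self (by positivity), mul_one]

/-- Bound on the positive part of the excess of the empirical second moment
of standard Gaussians (inequality (A.8)). -/
theorem stmt_18 {Ω : Type} [MeasurableSpace Ω] (P : Measure Ω) [IsProbabilityMeasure P]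
    (n : ℕ) (hn : 1 ≤ n) (U : Fin n → Ω → ℝ)
    (hmeas : ∀ i, Measurable (U i))
    (hindep : iIndepFun U P)
    (hgauss : ∀ i, Measure.map (U i) P = gaussianReal 0 1) :
    ∫ ω, max ((n : ℝ)⁻¹ * ∑ i, (U i ω) ^ 2 - 2) 0 ∂P
      ≤ (16 / (n : ℝ)) * Real.exp (-(n : ℝ) / 16) := by
  have hn0 : (0:ℝ) < n := by exact_mod_cast hn
  set Y : Fin n → Ω → ℝ := fun i ω => (U i ω) ^ 2 with hY
  have hYmeas : ∀ i, Measurable (Y i) := fun i => (hmeas i).pow_const 2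
  have hYindep : iIndepFun Y P :=
    hindep.comp (fun _ x => x ^ 2) (fun _ => measurable_id.pow_const 2)
  -- integrability of each exp((1/4) * U i ω ^ 2)
  have hint : ∀ i, Integrable (fun ω => Real.exp ((1/4) * Y i ω)) P := by
    intro i
    have hmg : Measurable (fun x : ℝ => Real.exp ((1/4) * x ^ 2)) := by measurability
    have h1 : Integrable (fun x : ℝ => Real.exp ((1/4) * x ^ 2)) (Measure.map (U i) P) := by
      rw [hgauss i]; exact gauss_exp_integrable
    exact (integrable_map_measure hmg.aestronglyMeasurable (hmeas i).aemeasurable).mp h1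
  have hSint : Integrable (fun ω => Real.exp ((1/4) * (∑ i, Y i) ω)) P :=
    hYindep.integrable_exp_mul_sum hYmeas (fun i _ => hint i)
  -- mgf of each Y i
  have hmgf_i : ∀ i, mgf (Y i) P (1/4) = Real.sqrt 2 := by
    intro i
    have hmg : Measurable (fun x : ℝ => Real.exp ((1/4) * x ^ 2)) := by measurability
    unfold mgf
    have : ∫ ω, Real.exp ((1/4) * Y i ω) ∂P
        = ∫ x, Real.exp ((1/4) * x ^ 2) ∂(Measure.map (U i) P) := by
      rw [integral_map (hmeas i).aemeasurable hmg.aestronglyMeasurable]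
    rw [this, hgauss i, gauss_exp_integral]
  have hmgf : mgf (∑ i, Y i) P (1/4) = (Real.sqrt 2) ^ n := by
    rw [hYindep.mgf_sum hYmeas, Finset.prod_congr rfl fun i _ => hmgf_i i,
      Finset.prod_const, Finset.card_univ, Fintype.card_fin]
  -- pointwise bound
  have key : ∀ x : ℝ, max ((n:ℝ)⁻¹ * x - 2) 0
      ≤ 4 / (n:ℝ) * Real.exp (-(n:ℝ)/2 - 1) * Real.exp ((1/4) * x) := by
    intro x
    have h1 := Real.add_one_le_exp (((n:ℝ)/4) * ((n:ℝ)⁻¹ * x - 2) - 1)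
    have h2 : Real.exp (((n:ℝ)/4) * ((n:ℝ)⁻¹ * x - 2) - 1)
        = Real.exp (-(n:ℝ)/2 - 1) * Real.exp ((1/4) * x) := by
      rw [← Real.exp_add]; congr 1
      have hne : (n:ℝ) ≠ 0 := hn0.ne'
      field_simp
      ring
    rw [h2] at h1
    apply max_le
    · have h3 : (n:ℝ)⁻¹ * x - 2 = (4/(n:ℝ)) * (((n:ℝ)/4) * ((n:ℝ)⁻¹ * x - 2)) := by
        field_simp
      rw [h3, mul_assoc]
      apply mul_le_mul_of_nonneg_left _ (by positivity)
      linarith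
    · positivity
  -- main integral bound
  have step1 : ∫ ω, max ((n : ℝ)⁻¹ * ∑ i, (U i ω) ^ 2 - 2) 0 ∂P
      ≤ ∫ ω, 4 / (n:ℝ) * Real.exp (-(n:ℝ)/2 - 1) * Real.exp ((1/4) * (∑ i, Y i) ω) ∂P := by
    apply integral_mono_of_nonneg
    · exact Filter.Eventually.of_forall fun ω => le_max_right _ _
    · exact hSint.const_mul _
    · refine Filter.Eventually.of_forall fun ω => ?_
      simp only [Finset.sum_apply]
      exact key _
  have step2 : ∫ ω, 4 / (n:ℝ) * Real.exp (-(n:ℝ)/2 - 1) * Real.exp ((1/4) * (∑ i, Y i) ω) ∂P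
      = 4 / (n:ℝ) * Real.exp (-(n:ℝ)/2 - 1) * (Real.sqrt 2) ^ n := by
    rw [integral_const_mul, ← hmgf]; rfl
  -- final arithmetic
  have hsqrt : Real.sqrt 2 ≤ Real.exp (7/16) := by
    have h1 : Real.sqrt 2 ≤ 23/16 := by
      rw [show (23:ℝ)/16 = Real.sqrt ((23/16)^2) by
        rw [Real.sqrt_sq (by norm_num)]]
      exact Real.sqrt_le_sqrt (by norm_num)
    have h2 := Real.add_one_le_exp (7/16 : ℝ)
    linarith
  have hpow : (Real.sqrt 2) ^ n ≤ Real.exp ((7/16) * n) := by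
    calc (Real.sqrt 2) ^ n ≤ (Real.exp (7/16)) ^ n :=
          pow_le_pow_left₀ (Real.sqrt_nonneg 2) hsqrt n
      _ = Real.exp ((7/16) * n) := by
          rw [← Real.exp_nat_mul]; ring_nf
  have final : 4 / (n:ℝ) * Real.exp (-(n:ℝ)/2 - 1) * (Real.sqrt 2) ^ n
      ≤ (16 / (n : ℝ)) * Real.exp (-(n : ℝ) / 16) := by
    calc 4 / (n:ℝ) * Real.exp (-(n:ℝ)/2 - 1) * (Real.sqrt 2) ^ n
        ≤ 4 / (n:ℝ) * Real.exp (-(n:ℝ)/2 - 1) * Real.exp ((7/16) * n) := by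
          apply mul_le_mul_of_nonneg_left hpow (by positivity)
      _ = 4 / (n:ℝ) * Real.exp (-(n:ℝ)/16 - 1) := by
          rw [mul_assoc, ← Real.exp_add]; ring_nf
      _ ≤ (16 / (n : ℝ)) * Real.exp (-(n : ℝ) / 16) := by
          have h1 : Real.exp (-(n:ℝ)/16 - 1) ≤ Real.exp (-(n:ℝ)/16) :=
            Real.exp_le_exp.mpr (by linarith)
          calc 4/(n:ℝ) * Real.exp (-(n:ℝ)/16 - 1)
              ≤ 4/(n:ℝ) * Real.exp (-(n:ℝ)/16) :=
                mul_le_mul_of_nonneg_left h1 (by positivity)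
            _ ≤ 16/(n:ℝ) * Real.exp (-(n:ℝ)/16) :=
                mul_le_mul_of_nonneg_right (by gcongr <;> norm_num) (Real.exp_pos _).le
  calc ∫ ω, max ((n : ℝ)⁻¹ * ∑ i, (U i ω) ^ 2 - 2) 0 ∂P
      ≤ 4 / (n:ℝ) * Real.exp (-(n:ℝ)/2 - 1) * (Real.sqrt 2) ^ n := step1.trans_eq step2
    _ ≤ (16 / (n : ℝ)) * Real.exp (-(n : ℝ) / 16) := final
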